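/- A countable group G is left-orderable if and only if G is nontrivial and embeds as a subgroup of the group of orientation-preserving homeomorphisms of ℝ. -/

import Mathlib

private lemma realOrderIso_ext {f g : ℝ ≃o ℝ} (h : ∀ q : ℚ, f q = g q) : f = g :=
  OrderIso.ext <| DenseRange.equalizer Rat.denseRange_cast f.toHomeomorph.continuous
    g.toHomeomorph.continuous (funext h)

open Set

private noncomputable def ratExt (f : ℚ ≃o ℚ) (x : ℝ) : ℝ :=
  sSup ((fun q : ℚ => (f q : ℝ)) '' {q : ℚ | (q : ℝ) ≤ x})

private lemma ratExt_ne (f : ℚ ≃o ℚ) (x : ℝ) :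
    ((fun q : ℚ => (f q : ℝ)) '' {q : ℚ | (q : ℝ) ≤ x}).Nonempty := by
  obtain ⟨q, hq⟩ := exists_rat_lt x
  exact ⟨f q, ⟨q, hq.le, rfl⟩⟩

private lemma ratExt_bdd (f : ℚ ≃o ℚ) (x : ℝ) :
    BddAbove ((fun q : ℚ => (f q : ℝ)) '' {q : ℚ | (q : ℝ) ≤ x}) := by
  obtain ⟨r, hr⟩ := exists_rat_gt x
  refine ⟨(f r : ℝ), ?_⟩
  rintro y ⟨q, hq, rfl⟩
  have hqr : q ≤ r := by exact_mod_cast (hq : (q:ℝ) ≤ x).trans hr.le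
  show (f q : ℝ) ≤ (f r : ℝ)
  exact_mod_cast f.monotone hqr

private lemma ratExt_rat (f : ℚ ≃o ℚ) (q : ℚ) : ratExt f (q : ℝ) = (f q : ℝ) := by
  apply IsGreatest.csSup_eq
  constructor
  · exact ⟨q, show (q:ℝ) ≤ (q:ℝ) from le_rfl, rfl⟩
  · rintro y ⟨p, hp, rfl⟩
    have : p ≤ q := by exact_mod_cast (hp : (p:ℝ) ≤ (q:ℝ))
    show (f p : ℝ) ≤ (f q : ℝ)
    exact_mod_cast f.monotone this

private lemma ratExt_comp (f g : ℚ ≃o ℚ) (x : ℝ) :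
    ratExt f (ratExt g x) = ratExt (g.trans f) x := by
  have key : ∀ p : ℚ, (p : ℝ) ≤ ratExt g x →
      (f p : ℝ) ≤ ratExt (g.trans f) x := by
    intro p hp
    by_contra h
    push_neg at h
    obtain ⟨z, hz1, hz2⟩ := exists_rat_btwn h
    have hzfp : z < f p := by exact_mod_cast hz2
    have hwp : f.symm z < p := by
      have := f.symm.strictMono hzfp
      simpa using this
    have hwlt : ((f.symm z : ℚ) : ℝ) < ratExt g x :=
      lt_of_lt_of_le (by exact_mod_cast hwp) hp
    obtain ⟨y, ⟨q, hq, rfl⟩, hwy⟩ := exists_lt_of_lt_csSup (ratExt_ne g x) hwlt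
    have h1 : f.symm z < g q := by
      have hwy' : ((f.symm z : ℚ) : ℝ) < ((g q : ℚ) : ℝ) := hwy
      exact_mod_cast hwy'
    have h2 : z < f (g q) := by
      have := f.strictMono h1
      simpa using this
    have h3 : (f (g q) : ℝ) ≤ ratExt (g.trans f) x :=
      le_csSup (ratExt_bdd (g.trans f) x) ⟨q, hq, rfl⟩
    have : (z : ℝ) < (z : ℝ) := lt_of_le_of_lt (le_of_lt (by exact_mod_cast h2)) (h3.trans_lt hz1)
    exact lt_irrefl _ this
  apply le_antisymm
  · apply csSup_le (ratExt_ne f (ratExt g x))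
    rintro y ⟨p, hp, rfl⟩
    exact key p hp
  · apply csSup_le (ratExt_ne (g.trans f) x)
    rintro y ⟨q, hq, rfl⟩
    have hmem : ((g q : ℚ) : ℝ) ≤ ratExt g x := le_csSup (ratExt_bdd g x) ⟨q, hq, rfl⟩
    exact le_csSup (ratExt_bdd f (ratExt g x)) ⟨g q, hmem, rfl⟩

private lemma ratExt_id (x : ℝ) : ratExt (OrderIso.refl ℚ) x = x := by
  apply le_antisymm
  · apply csSup_le (ratExt_ne _ x)
    rintro y ⟨q, hq, rfl⟩
    exact hq
  · by_contra h
    push_neg at h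
    obtain ⟨q, hq1, hq2⟩ := exists_rat_btwn h
    have : (q : ℝ) ≤ ratExt (OrderIso.refl ℚ) x :=
      le_csSup (ratExt_bdd _ x) ⟨q, hq2.le, rfl⟩
    exact lt_irrefl _ (hq1.trans_le this)

private lemma ratExt_strictMono (f : ℚ ≃o ℚ) : StrictMono (ratExt f) := by
  intro x y hxy
  obtain ⟨p, hp1, hp2⟩ := exists_rat_btwn hxy
  obtain ⟨q, hq1, hq2⟩ := exists_rat_btwn hp2
  have h1 : ratExt f x ≤ (f p : ℝ) := by
    apply csSup_le (ratExt_ne f x)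
    rintro y ⟨r, hr, rfl⟩
    have : r ≤ p := by exact_mod_cast (hr : (r:ℝ) ≤ x).trans hp1.le
    show (f r : ℝ) ≤ (f p : ℝ)
    exact_mod_cast f.monotone this
  have h2 : (f p : ℝ) < (f q : ℝ) := by
    have : p < q := by exact_mod_cast hq1
    exact_mod_cast f.strictMono this
  have h3 : (f q : ℝ) ≤ ratExt f y := le_csSup (ratExt_bdd f y) ⟨q, hq2.le, rfl⟩
  exact lt_of_le_of_lt h1 (lt_of_lt_of_le h2 h3)

private lemma ratExt_surj (f : ℚ ≃o ℚ) : Function.Surjective (ratExt f) := by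
  intro y
  refine ⟨ratExt f.symm y, ?_⟩
  rw [ratExt_comp, OrderIso.symm_trans_self, ratExt_id]

private noncomputable def ratExtIso (f : ℚ ≃o ℚ) : ℝ ≃o ℝ :=
  StrictMono.orderIsoOfSurjective (ratExt f) (ratExt_strictMono f) (ratExt_surj f)

private lemma ratExtIso_apply (f : ℚ ≃o ℚ) (x : ℝ) : ratExtIso f x = ratExt f x := rfl

/-- A (nontrivial) group is left-orderable if it admits a left-invariant
strict total order; by convention the trivial group is not left-orderable. -/
def IsLeftOrderable (G : Type*) [Group G] : Prop :=
  Nontrivial G ∧ ∃ lt : G → G → Prop,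
    IsStrictTotalOrder G lt ∧ ∀ f g h : G, lt g h → lt (f * g) (f * h)

/-- A countable group is left-orderable iff it is nontrivial and
embeds into the group of orientation-preserving homeomorphisms of `ℝ`. -/
theorem stmt7 (G : Type*) [Group G] [Countable G] :
    IsLeftOrderable G ↔
      Nontrivial G ∧ ∃ Φ : G →* (ℝ ≃o ℝ), Function.Injective Φ := by
  constructor
  · rintro ⟨hnt, lt, hsto, hinv⟩
    refine ⟨hnt, ?_⟩
    classical
    letI : LinearOrder G := @linearOrderOfSTO G lt hsto (Classical.decRel lt)
    have hmul : ∀ g a b : G, g * a < g * b ↔ a < b := by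
      intro g a b
      constructor
      · intro h
        have := hinv g⁻¹ _ _ h
        simp only [inv_mul_cancel_left] at this
        exact this
      · exact hinv g a b
    haveI : Countable (Lex (G × ℚ)) := inferInstanceAs (Countable (G × ℚ))
    haveI : Nonempty (Lex (G × ℚ)) := inferInstanceAs (Nonempty (G × ℚ))
    haveI : DenselyOrdered (Lex (G × ℚ)) := by
      constructor
      intro a b hab
      rcases Prod.Lex.lt_iff.1 hab with h | ⟨h1, h2⟩
      · exact ⟨toLex ((ofLex a).1, (ofLex a).2 + 1),
          Prod.Lex.lt_iff.2 (Or.inr ⟨rfl, lt_add_one _⟩),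
          Prod.Lex.lt_iff.2 (Or.inl h)⟩
      · obtain ⟨q, hq1, hq2⟩ := exists_between h2
        exact ⟨toLex ((ofLex a).1, q), Prod.Lex.lt_iff.2 (Or.inr ⟨rfl, hq1⟩),
          Prod.Lex.lt_iff.2 (Or.inr ⟨h1, hq2⟩)⟩
    haveI : NoMaxOrder (Lex (G × ℚ)) := by
      constructor
      intro a
      exact ⟨toLex ((ofLex a).1, (ofLex a).2 + 1),
        Prod.Lex.lt_iff.2 (Or.inr ⟨rfl, lt_add_one _⟩)⟩
    haveI : NoMinOrder (Lex (G × ℚ)) := by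
      constructor
      intro a
      exact ⟨toLex ((ofLex a).1, (ofLex a).2 - 1),
        Prod.Lex.lt_iff.2 (Or.inr ⟨rfl, sub_one_lt _⟩)⟩
    let act : G → (Lex (G × ℚ) ≃o Lex (G × ℚ)) := fun g =>
      { toFun := fun x => toLex (g * (ofLex x).1, (ofLex x).2)
        invFun := fun x => toLex (g⁻¹ * (ofLex x).1, (ofLex x).2)
        left_inv := fun x => by
          show toLex (g⁻¹ * (g * (ofLex x).1), (ofLex x).2) = x
          rw [inv_mul_cancel_left, Prod.mk.eta, toLex_ofLex]
        right_inv := fun x => by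
          show toLex (g * (g⁻¹ * (ofLex x).1), (ofLex x).2) = x
          rw [mul_inv_cancel_left, Prod.mk.eta, toLex_ofLex]
        map_rel_iff' := by
          intro x y
          show toLex (g * (ofLex x).1, (ofLex x).2) ≤ toLex (g * (ofLex y).1, (ofLex y).2) ↔
            toLex (ofLex x) ≤ toLex (ofLex y)
          rw [Prod.Lex.le_iff, Prod.Lex.le_iff]
          exact or_congr (hmul g _ _) (and_congr mul_left_cancel_iff Iff.rfl) }
    have hact_mul : ∀ g g' : G, act (g * g') = (act g').trans (act g) := by
      intro g g'
      apply OrderIso.ext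
      funext x
      show toLex ((g * g') * (ofLex x).1, (ofLex x).2)
        = toLex (g * (g' * (ofLex x).1), (ofLex x).2)
      rw [mul_assoc]
    obtain ⟨e⟩ := Order.iso_of_countable_dense (Lex (G × ℚ)) ℚ
    refine ⟨{ toFun := fun g => ratExtIso ((e.symm.trans (act g)).trans e)
              map_one' := ?_
              map_mul' := ?_ }, ?_⟩
    · apply OrderIso.ext
      funext x
      have h1 : (e.symm.trans (act 1)).trans e = OrderIso.refl ℚ := by
        apply OrderIso.ext
        funext q
        show e ((act 1) (e.symm q)) = q
        have : (act 1) (e.symm q) = e.symm q := by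
          show toLex (1 * (ofLex (e.symm q)).1, (ofLex (e.symm q)).2) = e.symm q
          rw [one_mul, Prod.mk.eta, toLex_ofLex]
        rw [this, e.apply_symm_apply]
      show ratExt ((e.symm.trans (act 1)).trans e) x = x
      rw [h1, ratExt_id]
    · intro g g'
      apply OrderIso.ext
      funext x
      have h1 : (e.symm.trans (act (g * g'))).trans e
          = ((e.symm.trans (act g')).trans e).trans ((e.symm.trans (act g)).trans e) := by
        apply OrderIso.ext
        funext q
        show e ((act (g * g')) (e.symm q)) = e ((act g) (e.symm (e ((act g') (e.symm q)))))
        rw [hact_mul, e.symm_apply_apply]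
        rfl
      show ratExt ((e.symm.trans (act (g * g'))).trans e) x
        = ratExt ((e.symm.trans (act g)).trans e) (ratExt ((e.symm.trans (act g')).trans e) x)
      rw [h1, ratExt_comp]
    · intro a b hab
      simp only [MonoidHom.coe_mk, OneHom.coe_mk] at hab
      have hq : ∀ q : ℚ, ((e.symm.trans (act a)).trans e) q = ((e.symm.trans (act b)).trans e) q := by
        intro q
        have h1 : ratExt ((e.symm.trans (act a)).trans e) (q : ℝ)
            = ratExt ((e.symm.trans (act b)).trans e) (q : ℝ) := by
          have := congrFun (congrArg (fun f : ℝ ≃o ℝ => (f : ℝ → ℝ)) hab) (q : ℝ)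
          exact this
        rw [ratExt_rat, ratExt_rat] at h1
        exact_mod_cast h1
      have hacteq : act a = act b := by
        apply OrderIso.ext
        funext x
        have h2' : e ((act a) (e.symm (e x))) = e ((act b) (e.symm (e x))) := hq (e x)
        rw [e.symm_apply_apply] at h2'
        exact e.injective h2'
      have h4 := congrArg (fun f : Lex (G × ℚ) ≃o Lex (G × ℚ) =>
        (ofLex (f (toLex ((1 : G), (0 : ℚ))))).1) hacteq
      simpa [act] using h4
  · rintro ⟨hnt, Φ, hΦ⟩
    refine ⟨hnt, ?_⟩
    obtain ⟨e, he⟩ := exists_surjective_nat ℚ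
    set F : G → Lex (ℕ → ℝ) := fun g => toLex fun n => Φ g (e n) with hF
    have hFinj : Function.Injective F := by
      intro a b hab
      apply hΦ
      apply realOrderIso_ext
      intro q
      obtain ⟨n, rfl⟩ := he q
      exact congrFun (congrArg ofLex hab) n
    refine ⟨fun a b => F a < F b, ?_, ?_⟩
    · refine { trichotomous := ?_
               irrefl := fun a => lt_irrefl (F a)
               trans := fun a b c => lt_trans }
      intro a b h1 h2
      rcases lt_trichotomy (F a) (F b) with h|h|h
      exacts [absurd h h1, hFinj h, absurd h h2]
    · intro f a b hab
      obtain ⟨i, hj, hi⟩ := hab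
      simp only [hF, map_mul]
      exact ⟨i, fun j hji => congrArg (Φ f) (hj j hji), (Φ f).strictMono hi⟩
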